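/- Let F : [0,∞) → ℝ be a cumulative distribution function of a nonnegative random variable (F nondecreasing, F(0) = 0, F(t) → 1 as t → ∞), continuously differentiable on [0,∞), satisfying the renewal equation F(t) = 2t/(1+t)³ + ∫₀ᵗ 2/(1+(t−y))³ · F(y) dy for all t ≥ 0. Then ∫₀ʰ t F′(t) dt ~ log(h) as h → ∞, i.e. (∫₀ʰ t F′(t) dt)/log(h) → 1 as h → ∞. -/

import Mathlib

open MeasureTheory Filter Set

lemma ftc (P p : ℝ → ℝ) (a b : ℝ) (hab : a ≤ b)
    (hP : ∀ x ∈ Icc a b, HasDerivAt P (p x) x) (hp : ContinuousOn p (Icc a b)) :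
    ∫ x in a..b, p x = P b - P a := by
  apply intervalIntegral.integral_eq_sub_of_hasDerivAt
  · intro x hx; exact hP x (by rwa [uIcc_of_le hab] at hx)
  · exact (hp.mono (by rw [uIcc_of_le hab])).intervalIntegrable

lemma intZ (h : ℝ) (hh : 0 ≤ h) :
    ∫ t in (0:ℝ)..h, 2 * t / (1 + t) ^ 3 = h ^ 2 / (1 + h) ^ 2 := by
  have key := ftc (fun t => t ^ 2 / (1 + t) ^ 2) (fun t => 2 * t / (1 + t) ^ 3) 0 h hh
    (fun x hx => ?_) (ContinuousOn.div (by fun_prop) (by fun_prop)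
      (fun x hx => by have := hx.1; positivity))
  · simpa using key
  · have hx0 : (0:ℝ) ≤ x := hx.1
    have h1 : HasDerivAt (fun t : ℝ => t ^ 2) (2 * x) x := by
      simpa using hasDerivAt_pow 2 x
    have h2 : HasDerivAt (fun t : ℝ => (1 + t) ^ 2) (2 * (1 + x)) x := by
      have := ((hasDerivAt_id x).const_add 1).fun_pow 2
      simpa [mul_comm] using this
    have hne : ((1 : ℝ) + x) ^ 2 ≠ 0 := by positivity
    have := h1.fun_div h2 hne
    refine this.congr_deriv ?_
    have : (1:ℝ) + x ≠ 0 := by positivity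
    field_simp
    ring

lemma intK (y h : ℝ) (hy : 0 ≤ y) (hyh : y ≤ h) :
    ∫ t in y..h, 2 / (1 + (t - y)) ^ 3 = 1 - 1 / (1 + (h - y)) ^ 2 := by
  have key := ftc (fun t => -(1 / (1 + (t - y)) ^ 2)) (fun t => 2 / (1 + (t - y)) ^ 3) y h hyh
    (fun x hx => ?_) (ContinuousOn.div (by fun_prop) (by fun_prop)
      (fun x hx => pow_ne_zero _ (by have := hx.1; nlinarith)))
  · simp only [one_div] at key ⊢; rw [key]; ring
  · have hx0 : 0 ≤ x - y := by linarith [hx.1]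
    have h2 : HasDerivAt (fun t : ℝ => (1 + (t - y)) ^ 2) (2 * (1 + (x - y))) x := by
      have : HasDerivAt (fun t : ℝ => 1 + (t - y)) 1 x := by
        simpa using ((hasDerivAt_id x).sub_const y).const_add 1
      simpa [mul_comm] using this.fun_pow 2
    have hne : ((1 : ℝ) + (x - y)) ^ 2 ≠ 0 := by positivity
    have := ((hasDerivAt_const x (1:ℝ)).fun_div h2 hne).fun_neg
    refine this.congr_deriv ?_
    have : (1:ℝ) + (x - y) ≠ 0 := by positivity
    field_simp
    ring

lemma intR (a h : ℝ) (ha : 0 ≤ a) (hah : a ≤ h) :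
    ∫ y in a..h, 1 / (1 + (h - y)) ^ 2 = 1 - 1 / (1 + (h - a)) := by
  have key := ftc (fun y => 1 / (1 + (h - y))) (fun y => 1 / (1 + (h - y)) ^ 2) a h hah
    (fun x hx => ?_) (ContinuousOn.div (by fun_prop) (by fun_prop)
      (fun x hx => pow_ne_zero _ (by have := hx.2; nlinarith)))
  · simp only [one_div] at key ⊢; rw [key]; ring
  · have hx0 : 0 ≤ h - x := by linarith [hx.2]
    have h2 : HasDerivAt (fun t : ℝ => 1 + (h - t)) (-1) x := by
      simpa using ((hasDerivAt_id x).const_sub h).const_add 1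
    have hne : ((1 : ℝ) + (h - x)) ≠ 0 := by positivity
    have := (hasDerivAt_const x (1:ℝ)).fun_div h2 hne
    refine this.congr_deriv ?_
    field_simp
    ring

lemma intL (a : ℝ) (ha : 0 ≤ a) :
    ∫ y in (0:ℝ)..a, 1 / (1 + y) = Real.log (1 + a) := by
  have key := ftc (fun y => Real.log (1 + y)) (fun y => 1 / (1 + y)) 0 a ha
    (fun x hx => ?_) (ContinuousOn.div (by fun_prop) (by fun_prop)
      (fun x hx => by have := hx.1; positivity))
  · simpa using key
  · have hx0 : (0:ℝ) ≤ x := hx.1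
    have hne : (1 : ℝ) + x ≠ 0 := by positivity
    have h2 : HasDerivAt (fun t : ℝ => 1 + t) 1 x := by
      simpa using (hasDerivAt_id x).const_add 1
    simpa [Function.comp_def] using (Real.hasDerivAt_log hne).comp x h2

lemma star (F : ℝ → ℝ) (hFc : ContinuousOn F (Ici 0))
    (hF0 : ∀ t, 0 ≤ t → 0 ≤ F t) (hF1 : ∀ t, 0 ≤ t → F t ≤ 1)
    (hrenewal : ∀ t, 0 ≤ t →
      F t = 2 * t / (1 + t) ^ 3 + ∫ y in (0:ℝ)..t, 2 / (1 + (t - y)) ^ 3 * F y)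
    (h : ℝ) (hh : 0 ≤ h) :
    ∫ y in (0:ℝ)..h, F y / (1 + (h - y)) ^ 2 = h ^ 2 / (1 + h) ^ 2 := by
  classical
  set Fc : ℝ → ℝ := fun y => F (max y 0) with hFcdef
  have hFcCont : Continuous Fc :=
    hFc.comp_continuous (continuous_id.max continuous_const) (fun x => Set.mem_Ici.mpr (le_max_right _ _))
  have hFceq : ∀ y : ℝ, 0 ≤ y → Fc y = F y := fun y hy => by
    simp [hFcdef, max_eq_left hy]
  have hFc01 : ∀ y : ℝ, 0 ≤ Fc y ∧ Fc y ≤ 1 := fun y =>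
    ⟨hF0 _ (le_max_right _ _), hF1 _ (le_max_right _ _)⟩
  set S : Set (ℝ × ℝ) := {p : ℝ × ℝ | 0 < p.2 ∧ p.2 ≤ p.1} with hSdef
  have hSmeas : MeasurableSet S :=
    ((isOpen_lt continuous_const continuous_snd).measurableSet).inter
      (isClosed_le continuous_snd continuous_fst).measurableSet
  set f : ℝ × ℝ → ℝ := fun p => 2 / (1 + (p.1 - p.2)) ^ 3 * Fc p.2 with hfdef
  have hfmeas : Measurable f := by
    apply Measurable.mul
    · exact measurable_const.div (((continuous_const.add
        (continuous_fst.sub continuous_snd)).pow 3).measurable)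
    · exact (hFcCont.comp continuous_snd).measurable
  set u : ℝ × ℝ → ℝ := S.indicator f with hudef
  have humeas : Measurable u := hfmeas.indicator hSmeas
  have hubd : ∀ p, |u p| ≤ 2 := by
    intro p
    rw [hudef]
    by_cases hp : p ∈ S
    · rw [Set.indicator_of_mem hp]
      have h1 : (0:ℝ) < p.2 := hp.1
      have h2 : p.2 ≤ p.1 := hp.2
      have h3 : (1:ℝ) ≤ 1 + (p.1 - p.2) := by linarith
      have h3' : (1:ℝ)^3 ≤ (1 + (p.1 - p.2)) ^ 3 := pow_le_pow_left₀ (by norm_num) h3 3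
      have h4 : (0:ℝ) < 2 / (1 + (p.1 - p.2)) ^ 3 := by positivity
      have h5 : 2 / (1 + (p.1 - p.2)) ^ 3 ≤ 2 := by
        rw [div_le_iff₀ (by positivity)]
        norm_num at h3' ⊢
        linarith
      have h6 := hFc01 p.2
      rw [hfdef, abs_of_nonneg (mul_nonneg h4.le h6.1)]
      calc 2 / (1 + (p.1 - p.2)) ^ 3 * Fc p.2 ≤ 2 / (1 + (p.1 - p.2)) ^ 3 * 1 :=
            mul_le_mul_of_nonneg_left h6.2 h4.le
        _ ≤ 2 := by linarith
    · rw [Set.indicator_of_notMem hp]; norm_num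
  set μ : Measure ℝ := volume.restrict (Ioc 0 h) with hμdef
  have hint : Integrable u (μ.prod μ) := by
    have hc : Integrable (fun _ : ℝ × ℝ => (2:ℝ)) (μ.prod μ) := integrable_const 2
    exact hc.mono' humeas.aestronglyMeasurable (Filter.Eventually.of_forall hubd)
  have hswap : ∫ t, (∫ y, u (t, y) ∂μ) ∂μ = ∫ y, (∫ t, u (t, y) ∂μ) ∂μ :=
    MeasureTheory.integral_integral_swap (f := fun t y => u (t, y)) hint
  -- LHS evaluation
  have hLHSinner : ∀ t ∈ Ioc (0:ℝ) h, (∫ y, u (t, y) ∂μ) = F t - 2 * t / (1 + t) ^ 3 := by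
    intro t ht
    have heq : (fun y => u (t, y)) =
        (Ioc (0:ℝ) t).indicator (fun y => 2 / (1 + (t - y)) ^ 3 * Fc y) := by
      funext y
      simp only [hudef, hfdef, Set.indicator_apply, hSdef, Set.mem_setOf_eq, Set.mem_Ioc]
    rw [heq, integral_indicator measurableSet_Ioc, hμdef,
      Measure.restrict_restrict measurableSet_Ioc]
    have hinter : Ioc (0:ℝ) t ∩ Ioc 0 h = Ioc 0 t := by
      rw [Set.Ioc_inter_Ioc]
      simp [min_eq_left ht.2]
    rw [hinter]
    have : ∫ y in Ioc (0:ℝ) t, 2 / (1 + (t - y)) ^ 3 * Fc y =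
        ∫ y in Ioc (0:ℝ) t, 2 / (1 + (t - y)) ^ 3 * F y := by
      apply setIntegral_congr_fun measurableSet_Ioc
      intro y hy
      show 2 / (1 + (t - y)) ^ 3 * Fc y = 2 / (1 + (t - y)) ^ 3 * F y
      rw [hFceq y hy.1.le]
    rw [this, ← intervalIntegral.integral_of_le ht.1.le]
    have := hrenewal t ht.1.le
    linarith
  have hRHSinner : ∀ y ∈ Ioc (0:ℝ) h,
      (∫ t, u (t, y) ∂μ) = F y * (1 - 1 / (1 + (h - y)) ^ 2) := by
    intro y hy
    have heq : (fun t => u (t, y)) =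
        (Ici y).indicator (fun t => 2 / (1 + (t - y)) ^ 3 * Fc y) := by
      funext t
      simp only [hudef, hfdef, Set.indicator_apply, hSdef, Set.mem_setOf_eq, Set.mem_Ici]
      congr 1
      simp only [eq_iff_iff]
      constructor
      · exact fun hp => hp.2
      · exact fun hp => ⟨hy.1, hp⟩
    rw [heq, integral_indicator measurableSet_Ici, hμdef,
      Measure.restrict_restrict measurableSet_Ici]
    have hinter : Ici y ∩ Ioc 0 h = Icc y h := by
      ext t
      simp only [Set.mem_inter_iff, Set.mem_Ici, Set.mem_Ioc, Set.mem_Icc]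
      constructor
      · exact fun ⟨h1, _, h3⟩ => ⟨h1, h3⟩
      · exact fun ⟨h1, h2⟩ => ⟨h1, lt_of_lt_of_le hy.1 h1, h2⟩
    rw [hinter, integral_Icc_eq_integral_Ioc, ← intervalIntegral.integral_of_le hy.2]
    rw [intervalIntegral.integral_mul_const, intK y h hy.1.le hy.2, hFceq y hy.1.le]
    ring
  -- integrability of pieces on Ioc 0 h
  have hFInt : IntegrableOn F (Ioc 0 h) := by
    exact ((hFc.mono (fun x hx => hx.1)).integrableOn_compact
      (isCompact_Icc (a := (0:ℝ)) (b := h))).mono_set Ioc_subset_Icc_self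
  have hzInt : IntegrableOn (fun t : ℝ => 2 * t / (1 + t) ^ 3) (Ioc 0 h) := by
    apply IntegrableOn.mono_set ?_ (Ioc_subset_Icc_self (a := (0:ℝ)) (b := h))
    exact ContinuousOn.integrableOn_compact isCompact_Icc
      (ContinuousOn.div (by fun_prop) (by fun_prop)
        (fun x hx => pow_ne_zero _ (by nlinarith [hx.1])))
  have hkInt : IntegrableOn (fun y : ℝ => F y / (1 + (h - y)) ^ 2) (Ioc 0 h) := by
    apply IntegrableOn.mono_set ?_ (Ioc_subset_Icc_self (a := (0:ℝ)) (b := h))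
    exact ContinuousOn.integrableOn_compact isCompact_Icc
      (ContinuousOn.div (hFc.mono (fun x hx => hx.1)) (by fun_prop)
        (fun x hx => pow_ne_zero _ (by nlinarith [hx.2])))
  have hL : ∫ t, (∫ y, u (t, y) ∂μ) ∂μ
      = (∫ t in Ioc (0:ℝ) h, F t) - h ^ 2 / (1 + h) ^ 2 := by
    rw [hμdef]
    rw [setIntegral_congr_fun measurableSet_Ioc (fun t ht => hLHSinner t ht)]
    rw [integral_sub hFInt hzInt]
    congr 1
    rw [← intervalIntegral.integral_of_le hh, intZ h hh]
  have hR : ∫ y, (∫ t, u (t, y) ∂μ) ∂μ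
      = (∫ y in Ioc (0:ℝ) h, F y) - ∫ y in Ioc (0:ℝ) h, F y / (1 + (h - y)) ^ 2 := by
    rw [hμdef]
    rw [setIntegral_congr_fun measurableSet_Ioc (fun y hy => hRHSinner y hy)]
    have : ∀ y ∈ Ioc (0:ℝ) h, F y * (1 - 1 / (1 + (h - y)) ^ 2)
        = F y - F y / (1 + (h - y)) ^ 2 := by
      intro y hy; ring
    rw [setIntegral_congr_fun measurableSet_Ioc this]
    exact integral_sub hFInt hkInt
  have hkey : ∫ y in Ioc (0:ℝ) h, F y / (1 + (h - y)) ^ 2 = h ^ 2 / (1 + h) ^ 2 := by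
    rw [hL, hR] at hswap
    linarith
  rw [intervalIntegral.integral_of_le hh]
  exact hkey

 section
variable (F F' : ℝ → ℝ)

variable (hFc : ContinuousOn F (Ici 0))
  (hF0 : ∀ t, 0 ≤ t → 0 ≤ F t) (hF1 : ∀ t, 0 ≤ t → F t ≤ 1)
  (hrenewal : ∀ t, 0 ≤ t →
      F t = 2 * t / (1 + t) ^ 3 + ∫ y in (0:ℝ)..t, 2 / (1 + (t - y)) ^ 3 * F y)

-- integrability helper
lemma intOn (G : ℝ → ℝ) (hG : ContinuousOn G (Ici 0)) (a b h : ℝ) (ha : 0 ≤ a) (hab : a ≤ b)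
    (hbh : b ≤ h) :
    IntervalIntegrable (fun y => G y / (1 + (h - y)) ^ 2) volume a b := by
  apply ContinuousOn.intervalIntegrable
  rw [uIcc_of_le hab]
  exact ContinuousOn.div (hG.mono (fun x hx => le_trans ha hx.1)) (by fun_prop)
    (fun x hx => pow_ne_zero _ (by nlinarith [hx.2, hbh]))

lemma tendsto_sq : Filter.Tendsto (fun h : ℝ => h ^ 2 / (1 + h) ^ 2) atTop (nhds 1) := by
  have l1 : Filter.Tendsto (fun h : ℝ => 1 - 1 / (1 + h)) atTop (nhds 1) := by
    have : Filter.Tendsto (fun h : ℝ => 1 / (1 + h)) atTop (nhds 0) := by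
      simp only [one_div]
      exact (tendsto_atTop_add_const_left _ 1 tendsto_id).inv_tendsto_atTop
    simpa using tendsto_const_nhds.sub this
  have l2 := l1.mul l1
  rw [show (1:ℝ) * 1 = 1 by norm_num] at l2
  apply l2.congr'
  filter_upwards [eventually_gt_atTop 0] with h hp
  have : (1:ℝ) + h ≠ 0 := by linarith
  field_simp
  ring

lemma tendsto_logpart : Filter.Tendsto (fun t : ℝ => Real.log (1 + t) / t) atTop (nhds 0) := by
  have l0 : Filter.Tendsto (fun x : ℝ => Real.log x / x) atTop (nhds 0) :=
    Real.isLittleO_log_id_atTop.tendsto_div_nhds_zero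
  have l1 : Filter.Tendsto (fun t : ℝ => Real.log (1 + t) / (1 + t)) atTop (nhds 0) :=
    l0.comp (tendsto_atTop_add_const_left _ 1 tendsto_id)
  have l2 : Filter.Tendsto (fun t : ℝ => (1 + t) / t) atTop (nhds 1) := by
    have : Filter.Tendsto (fun t : ℝ => 1 / t + 1) atTop (nhds 1) := by
      simpa using ((tendsto_inv_atTop_zero).congr (fun t => (one_div t).symm)).add
        (tendsto_const_nhds (α := ℝ) (x := (1:ℝ)))
    apply this.congr'
    filter_upwards [eventually_gt_atTop 0] with t ht
    field_simp
  have l3 := l1.mul l2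
  rw [zero_mul] at l3
  apply l3.congr'
  filter_upwards [eventually_gt_atTop 0] with t ht
  have h1 : (1:ℝ) + t ≠ 0 := by linarith
  field_simp

include hFc hF0 hF1 hrenewal in
lemma starD (h : ℝ) (hh : 0 ≤ h) :
    ∫ y in (0:ℝ)..h, (1 - F y) / (1 + (h - y)) ^ 2 = h / (1 + h) ^ 2 := by
  have e1 : ∀ y ∈ uIcc (0:ℝ) h, (1 - F y) / (1 + (h - y)) ^ 2
      = 1 / (1 + (h - y)) ^ 2 - F y / (1 + (h - y)) ^ 2 := fun y hy => by ring
  rw [intervalIntegral.integral_congr e1,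
    intervalIntegral.integral_sub (intOn (fun _ => 1) (by fun_prop) 0 h h le_rfl hh le_rfl)
      (intOn F hFc 0 h h le_rfl hh le_rfl),
    intR 0 h le_rfl hh, star F hFc hF0 hF1 hrenewal h hh]
  have h1 : (1:ℝ) + h > 0 := by linarith
  simp only [sub_zero]
  field_simp
  ring

include hFc hF0 hF1 hrenewal in
lemma Dle (hmono : ∀ a b : ℝ, 0 ≤ a → a ≤ b → F a ≤ F b)
    (h : ℝ) (hh : 0 ≤ h) : 1 - F h ≤ 1 / (1 + h) := by
  have key := starD F hFc hF0 hF1 hrenewal h hh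
  have hmon : ∫ y in (0:ℝ)..h, (1 - F h) / (1 + (h - y)) ^ 2
      ≤ ∫ y in (0:ℝ)..h, (1 - F y) / (1 + (h - y)) ^ 2 := by
    apply intervalIntegral.integral_mono_on hh
      (intOn (fun _ => 1 - F h) (by fun_prop) 0 h h le_rfl hh le_rfl)
      (intOn (fun y => 1 - F y) (by exact (continuousOn_const.sub hFc)) 0 h h le_rfl hh le_rfl)
    intro y hy
    have : F y ≤ F h := hmono y h hy.1 hy.2
    have hd : (0:ℝ) < (1 + (h - y)) ^ 2 := by nlinarith [hy.2]
    exact div_le_div_of_nonneg_right (by simpa using sub_le_sub_left this 1) hd.le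
  rcases eq_or_lt_of_le hh with rfl | hpos
  · have := hF0 0 le_rfl
    norm_num
    linarith
  · have hconst : ∫ y in (0:ℝ)..h, (1 - F h) / (1 + (h - y)) ^ 2
        = (1 - F h) * (1 - 1 / (1 + h)) := by
      have e : ∀ y ∈ uIcc (0:ℝ) h, (1 - F h) / (1 + (h - y)) ^ 2
          = (1 - F h) * (1 / (1 + (h - y)) ^ 2) := fun y hy => by ring
      rw [intervalIntegral.integral_congr e, intervalIntegral.integral_const_mul,
        intR 0 h le_rfl hh]
      norm_num
    rw [hconst, key] at hmon
    have h1 : (0:ℝ) < 1 + h := by linarith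
    have e2 : (1:ℝ) - 1 / (1 + h) = h / (1 + h) := by field_simp; ring
    rw [e2, mul_div_assoc', div_le_div_iff₀ h1 (by positivity)] at hmon
    rw [le_div_iff₀ h1]
    have hX : ((1 - F h) * (1 + h) - 1) * (h * (1 + h)) ≤ 0 := by nlinarith [hmon]
    nlinarith [mul_pos hpos h1]

include hFc hF0 hF1 hrenewal in
lemma Dlower (hmono : ∀ a b : ℝ, 0 ≤ a → a ≤ b → F a ≤ F b)
    (δ : ℝ) (hδ : 0 < δ) (hδ1 : δ < 1) :
    ∀ᶠ t in atTop, 1 - δ ≤ t * (1 - F t) := by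
  set ε : ℝ := δ / 2 with hεdef
  have hε : 0 < ε := by positivity
  have hε1 : ε < 1 := by simp only [hεdef]; linarith
  have hne : (1:ℝ) - ε ≠ 0 := by linarith
  set G : ℝ → ℝ := fun t =>
    (1 - ε) * ((t / (1 - ε)) ^ 2 / (1 + t / (1 - ε)) ^ 2) - Real.log (1 + t) / (ε ^ 2 * t)
    with hGdef
  have hGlim : Filter.Tendsto G atTop (nhds (1 - ε)) := by
    have c1 : Filter.Tendsto (fun t : ℝ => t / (1 - ε)) atTop atTop :=
      tendsto_id.atTop_div_const (by linarith)
    have c2 := (tendsto_sq.comp c1).const_mul (1 - ε)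
    rw [mul_one] at c2
    have c3 : Filter.Tendsto (fun t : ℝ => Real.log (1 + t) / (ε ^ 2 * t)) atTop (nhds 0) := by
      have hc := tendsto_logpart.const_mul (1 / ε ^ 2)
      rw [mul_zero] at hc
      apply hc.congr'
      filter_upwards [eventually_gt_atTop 0] with t ht
      have : ε ^ 2 ≠ 0 := by positivity
      field_simp
    simpa using c2.sub c3
  have hGev : ∀ᶠ t in atTop, 1 - δ < G t := by
    apply hGlim.eventually_const_lt
    simp only [hεdef]; linarith
  have hmain : ∀ᶠ t in atTop, G t ≤ t * (1 - F t) := by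
    filter_upwards [eventually_ge_atTop 1] with t ht1
    have ht0 : (0:ℝ) < t := by linarith
    set h : ℝ := t / (1 - ε) with hhdef
    have hεpos : (0:ℝ) < 1 - ε := by linarith
    have hth : t ≤ h := by
      rw [hhdef, le_div_iff₀ hεpos]
      nlinarith
    have hh0 : (0:ℝ) ≤ h := le_trans ht0.le hth
    have hht : ε * t ≤ h - t := by
      have he : h - t = t * ε / (1 - ε) := by rw [hhdef]; field_simp; ring
      rw [he, le_div_iff₀ hεpos]
      nlinarith [mul_pos (mul_pos hε hε) ht0]
    have key := starD F hFc hF0 hF1 hrenewal h hh0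
    have hsplit : (∫ y in (0:ℝ)..t, (1 - F y) / (1 + (h - y)) ^ 2)
        + (∫ y in t..h, (1 - F y) / (1 + (h - y)) ^ 2)
        = ∫ y in (0:ℝ)..h, (1 - F y) / (1 + (h - y)) ^ 2 :=
      intervalIntegral.integral_add_adjacent_intervals
        (intOn (fun y => 1 - F y) (continuousOn_const.sub hFc) 0 t h le_rfl ht0.le hth)
        (intOn (fun y => 1 - F y) (continuousOn_const.sub hFc) t h h ht0.le hth le_rfl)
    have b1 : (∫ y in (0:ℝ)..t, (1 - F y) / (1 + (h - y)) ^ 2)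
        ≤ Real.log (1 + t) * (1 / (ε * t) ^ 2) := by
      have mono : (∫ y in (0:ℝ)..t, (1 - F y) / (1 + (h - y)) ^ 2)
          ≤ ∫ y in (0:ℝ)..t, (1 / (1 + y)) * (1 / (ε * t) ^ 2) := by
        apply intervalIntegral.integral_mono_on ht0.le
          (intOn (fun y => 1 - F y) (continuousOn_const.sub hFc) 0 t h le_rfl ht0.le hth)
        · apply ContinuousOn.intervalIntegrable
          rw [uIcc_of_le ht0.le]
          apply ContinuousOn.mul ?_ continuousOn_const
          exact ContinuousOn.div continuousOn_const (by fun_prop)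
            (fun x hx => by nlinarith [hx.1])
        · intro y hy
          have hDy : 1 - F y ≤ 1 / (1 + y) := Dle F hFc hF0 hF1 hrenewal hmono y hy.1
          have hden : (ε * t) ^ 2 ≤ (1 + (h - y)) ^ 2 := by
            have : ε * t ≤ 1 + (h - y) := by nlinarith [hy.2]
            nlinarith [mul_pos hε ht0]
          have hεt : (0:ℝ) < (ε * t) ^ 2 := by positivity
          have hDy0 : 0 ≤ 1 - F y := by
            have := hF1 y hy.1; linarith
          calc (1 - F y) / (1 + (h - y)) ^ 2 ≤ (1 - F y) / (ε * t) ^ 2 :=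
                div_le_div_of_nonneg_left hDy0 hεt hden
            _ ≤ (1 / (1 + y)) / (ε * t) ^ 2 := div_le_div_of_nonneg_right hDy hεt.le
            _ = (1 / (1 + y)) * (1 / (ε * t) ^ 2) := by ring
      rw [intervalIntegral.integral_mul_const, intL t ht0.le] at mono
      exact mono
    have b2 : (∫ y in t..h, (1 - F y) / (1 + (h - y)) ^ 2) ≤ 1 - F t := by
      have mono : (∫ y in t..h, (1 - F y) / (1 + (h - y)) ^ 2)
          ≤ ∫ y in t..h, (1 - F t) * (1 / (1 + (h - y)) ^ 2) := by
        apply intervalIntegral.integral_mono_on hth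
          (intOn (fun y => 1 - F y) (continuousOn_const.sub hFc) t h h ht0.le hth le_rfl)
        · apply ContinuousOn.intervalIntegrable
          rw [uIcc_of_le hth]
          apply continuousOn_const.mul
          exact ContinuousOn.div continuousOn_const (by fun_prop)
            (fun x hx => pow_ne_zero _ (by nlinarith [hx.2]))
        · intro y hy
          have hFyt : F t ≤ F y := hmono t y ht0.le hy.1
          have hd2 : (0:ℝ) < (1 + (h - y)) ^ 2 := by nlinarith [hy.2]
          calc (1 - F y) / (1 + (h - y)) ^ 2 ≤ (1 - F t) / (1 + (h - y)) ^ 2 :=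
                div_le_div_of_nonneg_right (by linarith) hd2.le
            _ = (1 - F t) * (1 / (1 + (h - y)) ^ 2) := by ring
      rw [intervalIntegral.integral_const_mul, intR t h ht0.le hth] at mono
      have hDt0 : 0 ≤ 1 - F t := by have := hF1 t ht0.le; linarith
      have hfrac : 0 ≤ 1 / (1 + (h - t)) := by
        have : (0:ℝ) < 1 + (h - t) := by nlinarith
        positivity
      nlinarith
    have hcomb : h / (1 + h) ^ 2 - Real.log (1 + t) * (1 / (ε * t) ^ 2) ≤ 1 - F t := by
      rw [← hsplit] at key
      linarith
    have h1h : (0:ℝ) < 1 + h := by linarith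
    have e1 : t * (h / (1 + h) ^ 2) = (1 - ε) * (h ^ 2 / (1 + h) ^ 2) := by
      have : t = (1 - ε) * h := by rw [hhdef]; field_simp
      rw [this]; ring
    have e2 : t * (Real.log (1 + t) * (1 / (ε * t) ^ 2)) = Real.log (1 + t) / (ε ^ 2 * t) := by
      have hεne : ε ≠ 0 := hε.ne'
      field_simp
    have hGt : G t = t * (h / (1 + h) ^ 2) - t * (Real.log (1 + t) * (1 / (ε * t) ^ 2)) := by
      simp only [hGdef]
      rw [← hhdef, e1, e2]
    have hdist := mul_le_mul_of_nonneg_left hcomb ht0.le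
    have hexp : t * (h / (1 + h) ^ 2 - Real.log (1 + t) * (1 / (ε * t) ^ 2))
        = t * (h / (1 + h) ^ 2) - t * (Real.log (1 + t) * (1 / (ε * t) ^ 2)) := by ring
    rw [hexp] at hdist
    rw [hGt]
    linarith
  filter_upwards [hGev, hmain] with t h1 h2
  linarith

include hFc hF0 hF1 hrenewal in
lemma Davg (hmono : ∀ a b : ℝ, 0 ≤ a → a ≤ b → F a ≤ F b) :
    Filter.Tendsto (fun h : ℝ => (∫ y in (0:ℝ)..h, (1 - F y)) / Real.log h)
      atTop (nhds 1) := by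
  have hDint : ∀ a b : ℝ, 0 ≤ a → a ≤ b →
      IntervalIntegrable (fun y => 1 - F y) volume a b := by
    intro a b ha hab
    apply ContinuousOn.intervalIntegrable
    rw [uIcc_of_le hab]
    exact (continuousOn_const.sub hFc).mono (fun x hx => le_trans ha hx.1)
  have hDnn : ∀ y : ℝ, 0 ≤ y → 0 ≤ 1 - F y := fun y hy => by
    have := hF1 y hy; linarith
  rw [tendsto_order]
  constructor
  · -- lower bound
    intro c hc
    set c' : ℝ := max c 0 with hc'def
    have hc'0 : 0 ≤ c' := le_max_right _ _
    have hc'1 : c' < 1 := max_lt hc (by norm_num)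
    set δ : ℝ := (1 - c') / 2 with hδdef
    have hδ : 0 < δ := by simp only [hδdef]; linarith
    have hδ1 : δ < 1 := by simp only [hδdef]; linarith
    have hlow := Dlower F hFc hF0 hF1 hrenewal hmono δ hδ hδ1
    rw [eventually_atTop] at hlow
    obtain ⟨T₀, hT₀⟩ := hlow
    set T : ℝ := max T₀ 1 with hTdef
    have hT1 : (1:ℝ) ≤ T := le_max_right _ _
    have hT0 : (0:ℝ) < T := by linarith
    have hTb : ∀ t : ℝ, T ≤ t → 1 - δ ≤ t * (1 - F t) := fun t ht =>
      hT₀ t (le_trans (le_max_left _ _) ht)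
    -- limit function L
    have hLlim : Filter.Tendsto (fun h : ℝ => (1 - δ) * (1 - Real.log T / Real.log h))
        atTop (nhds (1 - δ)) := by
      have l1 : Filter.Tendsto (fun h : ℝ => Real.log T / Real.log h) atTop (nhds 0) := by
        have := Real.tendsto_log_atTop.inv_tendsto_atTop.const_mul (Real.log T)
        rw [mul_zero] at this
        apply this.congr
        intro h; rw [Pi.inv_apply]; ring
      have l2 := (tendsto_const_nhds (x := (1:ℝ)) (f := atTop (α := ℝ))).sub l1
      rw [sub_zero] at l2
      have l3 := l2.const_mul (1 - δ)
      rw [mul_one] at l3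
      exact l3
    have hLev : ∀ᶠ h : ℝ in atTop, c' < (1 - δ) * (1 - Real.log T / Real.log h) := by
      apply hLlim.eventually_const_lt
      simp only [hδdef]; linarith
    filter_upwards [hLev, eventually_ge_atTop T, eventually_ge_atTop 2] with h hL hhT hh2
    have hlogh : 0 < Real.log h := Real.log_pos (by linarith)
    have hint1 : (∫ y in (0:ℝ)..T, (1 - F y)) ≥ 0 :=
      intervalIntegral.integral_nonneg (by linarith) (fun y hy => hDnn y hy.1)
    have hint2 : (∫ y in T..h, (1 - F y)) ≥ (1 - δ) * (Real.log h - Real.log T) := by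
      have mono : (∫ y in T..h, (1 - δ) * (1 / y)) ≤ ∫ y in T..h, (1 - F y) := by
        apply intervalIntegral.integral_mono_on hhT
        · apply ContinuousOn.intervalIntegrable
          rw [uIcc_of_le hhT]
          exact continuousOn_const.mul (ContinuousOn.div continuousOn_const
            (by fun_prop) (fun x hx => by nlinarith [hx.1]))
        · exact hDint T h hT0.le hhT
        · intro y hy
          have hy0 : 0 < y := lt_of_lt_of_le hT0 hy.1
          have := hTb y hy.1
          rw [mul_one_div, div_le_iff₀ hy0]
          nlinarith
      have hval : (∫ y in T..h, (1 - δ) * (1 / y)) = (1 - δ) * (Real.log h - Real.log T) := by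
        rw [intervalIntegral.integral_const_mul, integral_one_div ?hne]
        · rw [Real.log_div (by linarith) (by linarith)]
        · rw [uIcc_of_le hhT]
          intro hmem
          exact absurd hmem.1 (by linarith)
      linarith [mono, hval.symm.le]
    have hsplit : (∫ y in (0:ℝ)..T, (1 - F y)) + (∫ y in T..h, (1 - F y))
        = ∫ y in (0:ℝ)..h, (1 - F y) :=
      intervalIntegral.integral_add_adjacent_intervals (hDint 0 T le_rfl hT0.le)
        (hDint T h hT0.le hhT)
    have hTotal : (1 - δ) * (Real.log h - Real.log T) ≤ ∫ y in (0:ℝ)..h, (1 - F y) := by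
      linarith
    have hc'lt : c' < (∫ y in (0:ℝ)..h, (1 - F y)) / Real.log h := by
      rw [lt_div_iff₀ hlogh]
      have hexp : (1 - δ) * (1 - Real.log T / Real.log h) * Real.log h
          = (1 - δ) * (Real.log h - Real.log T) := by
        field_simp
      nlinarith [hL, hexp, hTotal, hlogh]
    exact lt_of_le_of_lt (le_max_left c 0) hc'lt
  · -- upper bound
    intro c hc
    have hUlim : Filter.Tendsto (fun h : ℝ => 1 + Real.log 2 / Real.log h) atTop (nhds 1) := by
      have l1 : Filter.Tendsto (fun h : ℝ => Real.log 2 / Real.log h) atTop (nhds 0) := by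
        have := Real.tendsto_log_atTop.inv_tendsto_atTop.const_mul (Real.log 2)
        rw [mul_zero] at this
        apply this.congr
        intro h; rw [Pi.inv_apply]; ring
      have := (tendsto_const_nhds (x := (1:ℝ)) (f := atTop (α := ℝ))).add l1
      rw [add_zero] at this
      exact this
    have hUev : ∀ᶠ h : ℝ in atTop, 1 + Real.log 2 / Real.log h < c :=
      hUlim.eventually_lt_const hc
    filter_upwards [hUev, eventually_ge_atTop 2] with h hU hh2
    have hh0 : (0:ℝ) ≤ h := by linarith
    have hlogh : 0 < Real.log h := Real.log_pos (by linarith)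
    have hub : (∫ y in (0:ℝ)..h, (1 - F y)) ≤ Real.log (1 + h) := by
      have mono : (∫ y in (0:ℝ)..h, (1 - F y)) ≤ ∫ y in (0:ℝ)..h, 1 / (1 + y) := by
        apply intervalIntegral.integral_mono_on hh0 (hDint 0 h le_rfl hh0)
        · apply ContinuousOn.intervalIntegrable
          rw [uIcc_of_le hh0]
          exact ContinuousOn.div continuousOn_const (by fun_prop)
            (fun x hx => by nlinarith [hx.1])
        · exact fun y hy => Dle F hFc hF0 hF1 hrenewal hmono y hy.1
      rw [intL h hh0] at mono
      exact mono
    have hub2 : Real.log (1 + h) ≤ Real.log 2 + Real.log h := by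
      rw [← Real.log_mul (by norm_num) (by linarith)]
      apply Real.log_le_log (by linarith)
      linarith
    calc (∫ y in (0:ℝ)..h, (1 - F y)) / Real.log h
        ≤ (Real.log 2 + Real.log h) / Real.log h := by
          apply div_le_div_of_nonneg_right ?_ hlogh.le
          linarith
      _ = 1 + Real.log 2 / Real.log h := by field_simp; ring
      _ < c := hU


theorem final
    (hrenewal : ∀ t, 0 ≤ t →
      F t = 2 * t / (1 + t) ^ 3 + ∫ y in (0:ℝ)..t, 2 / (1 + (t - y)) ^ 3 * F y)
    (hmono : ∀ a b : ℝ, 0 ≤ a → a ≤ b → F a ≤ F b)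
    (hzero : F 0 = 0)
    (hlim : Filter.Tendsto F atTop (nhds 1))
    (hderiv : ∀ t, 0 ≤ t → HasDerivWithinAt F (F' t) (Ici 0) t)
    (hcont : ContinuousOn F' (Ici 0)) :
    Filter.Tendsto
      (fun h : ℝ => (∫ t in (0:ℝ)..h, t * F' t) / Real.log h)
      atTop (nhds 1) := by
  have hFcont : ContinuousOn F (Ici 0) := fun t ht => (hderiv t ht).continuousWithinAt
  have hF0 : ∀ t : ℝ, 0 ≤ t → 0 ≤ F t := fun t ht => hzero ▸ hmono 0 t le_rfl ht
  have hF1 : ∀ t : ℝ, 0 ≤ t → F t ≤ 1 := by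
    intro t ht
    apply ge_of_tendsto hlim
    filter_upwards [eventually_ge_atTop t] with b hb
    exact hmono t b ht hb
  -- integration by parts
  have hibp : ∀ h : ℝ, 0 ≤ h →
      (∫ t in (0:ℝ)..h, t * F' t) = (∫ t in (0:ℝ)..h, (1 - F t)) - h * (1 - F h) := by
    intro h hh
    have hFi : IntervalIntegrable F volume 0 h := by
      apply ContinuousOn.intervalIntegrable
      rw [uIcc_of_le hh]
      exact hFcont.mono (fun x hx => hx.1)
    have htFi : IntervalIntegrable (fun t => t * F' t) volume 0 h := by
      apply ContinuousOn.intervalIntegrable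
      rw [uIcc_of_le hh]
      exact continuousOn_id.mul (hcont.mono (fun x hx => hx.1))
    have hsum : IntervalIntegrable (fun t => F t + t * F' t) volume 0 h := hFi.add htFi
    have hFTC : (∫ t in (0:ℝ)..h, (F t + t * F' t)) = h * F h - 0 * F 0 := by
      apply intervalIntegral.integral_eq_sub_of_hasDeriv_right_of_le hh
      · exact continuousOn_id.mul (hFcont.mono (fun x hx => hx.1))
      · intro x hx
        have hFx : HasDerivAt F (F' x) x :=
          (hderiv x hx.1.le).hasDerivAt (Ici_mem_nhds hx.1)
        have := (hasDerivAt_id x).mul hFx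
        simp only [one_mul, id_eq] at this
        exact this.hasDerivWithinAt
      · exact hsum
    have hadd : (∫ t in (0:ℝ)..h, (F t + t * F' t))
        = (∫ t in (0:ℝ)..h, F t) + ∫ t in (0:ℝ)..h, t * F' t :=
      intervalIntegral.integral_add hFi htFi
    have hone : (∫ t in (0:ℝ)..h, (1 - F t)) = h - ∫ t in (0:ℝ)..h, F t := by
      rw [intervalIntegral.integral_sub intervalIntegrable_const hFi]
      simp
    rw [zero_mul, sub_zero] at hFTC
    rw [hone]
    have := hFTC ▸ hadd
    linarith [hadd, hFTC]
  -- remainder tends to zero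
  have hrem : Filter.Tendsto (fun h : ℝ => h * (1 - F h) / Real.log h) atTop (nhds 0) := by
    apply tendsto_of_tendsto_of_tendsto_of_le_of_le'
      (tendsto_const_nhds (x := (0:ℝ))) Real.tendsto_log_atTop.inv_tendsto_atTop
    · filter_upwards [eventually_ge_atTop 2] with h hh2
      have hh0 : (0:ℝ) ≤ h := by linarith
      have hlogh : 0 < Real.log h := Real.log_pos (by linarith)
      have hD0 : 0 ≤ 1 - F h := by have := hF1 h hh0; linarith
      positivity
    · filter_upwards [eventually_ge_atTop 2] with h hh2
      have hh0 : (0:ℝ) ≤ h := by linarith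
      have hlogh : 0 < Real.log h := Real.log_pos (by linarith)
      have hDle := Dle F hFcont hF0 hF1 hrenewal hmono h hh0
      have h1 : h * (1 - F h) ≤ 1 := by
        have h2 : h * (1 - F h) ≤ h * (1 / (1 + h)) := by
          apply mul_le_mul_of_nonneg_left hDle hh0
        have h3 : h * (1 / (1 + h)) ≤ 1 := by
          rw [mul_one_div, div_le_one (by linarith)]
          linarith
        linarith
      rw [Pi.inv_apply, div_le_iff₀ hlogh, inv_mul_cancel₀ hlogh.ne']
      exact h1
  have hmain := (Davg F hFcont hF0 hF1 hrenewal hmono).sub hrem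
  rw [sub_zero] at hmain
  apply hmain.congr'
  filter_upwards [eventually_ge_atTop 2] with h hh2
  have hh0 : (0:ℝ) ≤ h := by linarith
  rw [hibp h hh0, sub_div]
end


/-- For the CDF `F` solving the renewal equation,
`∫₀ʰ t F'(t) dt ~ log h` as `h → ∞`. -/
theorem truncated_first_moment_asymptotic
    (F F' : ℝ → ℝ)
    (hmono : ∀ a b : ℝ, 0 ≤ a → a ≤ b → F a ≤ F b)
    (hzero : F 0 = 0)
    (hlim : Filter.Tendsto F atTop (nhds 1))
    (hderiv : ∀ t, 0 ≤ t → HasDerivWithinAt F (F' t) (Ici 0) t)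
    (hcont : ContinuousOn F' (Ici 0))
    (hrenewal : ∀ t, 0 ≤ t →
      F t = 2 * t / (1 + t) ^ 3 + ∫ y in (0:ℝ)..t, 2 / (1 + (t - y)) ^ 3 * F y) :
    Filter.Tendsto
      (fun h : ℝ => (∫ t in (0:ℝ)..h, t * F' t) / Real.log h)
      atTop (nhds 1) := by
  exact final F F' hrenewal hmono hzero hlim hderiv hcont
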